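/- Under the same hypotheses, if additionally L_BT(r) ≥ L_BT(r₀), then E_{P̃}[ (Δ_r − Δ_{r₀})² ] ≤ 4·( (ε/c_B)² + (1/(Z·c_B))·( L_BT(r) − L_BT(r₀) ) ). -/

import Mathlib

open scoped BigOperators

/-- The sigmoid function σ(t) = 1/(1+e^{-t}). -/
noncomputable def sigmoid (t : ℝ) : ℝ := 1 / (1 + Real.exp (-t))

/-- The population Bradley–Terry objective. -/
noncomputable def LBT {X Y : Type*} [Fintype X] [Fintype Y]
    (P : X → Y → Y → ℝ) (r : X → Y → ℝ) : ℝ :=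
  -∑ x, ∑ y, ∑ y', P x y y' * Real.log (sigmoid (r x y - r x y'))

/-- Normalizing constant Z of the comparison distribution P̃. -/
noncomputable def Zconst {X Y : Type*} [Fintype X] [Fintype Y] [DecidableEq Y]
    (P : X → Y → Y → ℝ) : ℝ :=
  (∑ x, ∑ y, ∑ y', if y ≠ y' then P x y y' + P x y' y else 0) / 2

/-- Expectation under the comparison distribution P̃ of a symmetric function of (x,{y,y'}). -/
noncomputable def ePt {X Y : Type*} [Fintype X] [Fintype Y] [DecidableEq Y]
    (P : X → Y → Y → ℝ) (f : X → Y → Y → ℝ) : ℝ :=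
  (∑ x, ∑ y, ∑ y', if y ≠ y' then (P x y y' + P x y' y) * f x y y' else 0) /
    (2 * Zconst P)

lemma one_add_exp_pos (t : ℝ) : 0 < 1 + Real.exp t := by positivity

lemma exp_mul_exp_neg (t : ℝ) : Real.exp t * Real.exp (-t) = 1 := by
  rw [← Real.exp_add]; simp

lemma sigmoid_pos (t : ℝ) : 0 < sigmoid t := by
  unfold sigmoid; positivity

lemma sigmoid_lt_one (t : ℝ) : sigmoid t < 1 := by
  unfold sigmoid
  rw [div_lt_one (one_add_exp_pos _)]
  linarith [Real.exp_pos (-t)]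

lemma sigmoid_neg (t : ℝ) : sigmoid (-t) = 1 - sigmoid t := by
  unfold sigmoid
  have h1 := one_add_exp_pos t
  have h2 := one_add_exp_pos (-t)
  have h3 := exp_mul_exp_neg t
  rw [neg_neg]
  field_simp
  nlinarith

lemma sig_mul (t : ℝ) : sigmoid t * (1 - sigmoid t)
    = 1 / ((1 + Real.exp (-t)) * (1 + Real.exp t)) := by
  unfold sigmoid
  have h1 := one_add_exp_pos (-t)
  have h2 := one_add_exp_pos t
  have h3 := exp_mul_exp_neg t
  field_simp
  nlinarith [h3]

lemma log_sigmoid (t : ℝ) : Real.log (sigmoid t) = t - Real.log (1 + Real.exp t) := by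
  unfold sigmoid
  rw [one_div, Real.log_inv]
  have h : 1 + Real.exp t = Real.exp t * (1 + Real.exp (-t)) := by
    rw [mul_add, mul_one, exp_mul_exp_neg]; ring
  rw [h, Real.log_mul (Real.exp_ne_zero t) (ne_of_gt (one_add_exp_pos (-t))),
    Real.log_exp]
  ring

lemma softplus_neg (t : ℝ) : Real.log (1 + Real.exp (-t)) = Real.log (1 + Real.exp t) - t := by
  have h : 1 + Real.exp (-t) = Real.exp (-t) * (1 + Real.exp t) := by
    rw [mul_add, mul_one, ← Real.exp_add]; simp [add_comm]
  rw [h, Real.log_mul (Real.exp_ne_zero (-t)) (ne_of_gt (one_add_exp_pos t)),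
    Real.log_exp]
  ring

lemma hasDerivAt_sigmoid (t : ℝ) :
    HasDerivAt sigmoid (sigmoid t * (1 - sigmoid t)) t := by
  have h1 : HasDerivAt (fun s : ℝ => 1 + Real.exp (-s)) (-Real.exp (-t)) t := by
    have := ((hasDerivAt_id t).neg).exp
    simpa using this.const_add 1
  have h2 := h1.inv (ne_of_gt (one_add_exp_pos (-t)))
  have heq : sigmoid t * (1 - sigmoid t)
      = Real.exp (-t) / (1 + Real.exp (-t)) ^ 2 := by
    unfold sigmoid
    have := one_add_exp_pos (-t)
    field_simp
    ring
  rw [heq]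
  have hs : sigmoid = fun s : ℝ => (1 + Real.exp (-s))⁻¹ := by
    funext s; simp [sigmoid, one_div]
  rw [hs]
  rw [neg_neg] at h2
  exact h2

lemma hasDerivAt_softplus (t : ℝ) :
    HasDerivAt (fun s : ℝ => Real.log (1 + Real.exp s)) (sigmoid t) t := by
  have h1 : HasDerivAt (fun s : ℝ => 1 + Real.exp s) (Real.exp t) t := by
    simpa using (Real.hasDerivAt_exp t).const_add 1
  have h2 := h1.log (ne_of_gt (one_add_exp_pos t))
  have heq : Real.exp t / (1 + Real.exp t) = sigmoid t := by
    unfold sigmoid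
    have h3 := one_add_exp_pos t
    have h4 := one_add_exp_pos (-t)
    have h5 := exp_mul_exp_neg t
    field_simp
    nlinarith
  simpa [heq] using h2

lemma cB_le {B t : ℝ} (h : |t| ≤ 2 * B) :
    sigmoid (2 * B) * (1 - sigmoid (2 * B)) ≤ sigmoid t * (1 - sigmoid t) := by
  rw [sig_mul, sig_mul]
  have ht1 : t ≤ 2 * B := (abs_le.1 h).2
  have ht2 : -(2 * B) ≤ t := (abs_le.1 h).1
  have hA : Real.exp t ≤ Real.exp (2 * B) := Real.exp_le_exp.2 ht1
  have hE : Real.exp (-t - 2 * B) ≤ 1 := Real.exp_le_one_iff.2 (by linarith)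
  have hid1 : Real.exp (-t - 2 * B) * Real.exp (2 * B) = Real.exp (-t) := by
    rw [← Real.exp_add]; ring_nf
  have hid2 : Real.exp (-t - 2 * B) * Real.exp t = Real.exp (-(2 * B)) := by
    rw [← Real.exp_add]; ring_nf
  have key : (1 + Real.exp (-t)) * (1 + Real.exp t)
      ≤ (1 + Real.exp (-(2 * B))) * (1 + Real.exp (2 * B)) := by
    have h1 : (1 - Real.exp (-t - 2 * B)) * (Real.exp (2*B) - Real.exp t) ≥ 0 :=
      mul_nonneg (by linarith) (by linarith)
    have h2 : Real.exp t * Real.exp (-t) = 1 := exp_mul_exp_neg t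
    have h3 : Real.exp (2*B) * Real.exp (-(2*B)) = 1 := exp_mul_exp_neg _
    nlinarith
  exact one_div_le_one_div_of_le (by positivity) key

lemma sig_strong_mono (B : ℝ) :
    MonotoneOn (fun t => sigmoid t - (sigmoid (2*B) * (1 - sigmoid (2*B))) * t)
      (Set.Icc (-(2*B)) (2*B)) := by
  set c := sigmoid (2*B) * (1 - sigmoid (2*B)) with hc
  have hder : ∀ t : ℝ, HasDerivAt (fun t => sigmoid t - c * t)
      (sigmoid t * (1 - sigmoid t) - c) t := by
    intro t
    have h2 : HasDerivAt (fun t : ℝ => c * t) c t := by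
      simpa using (hasDerivAt_id t).const_mul c
    exact (hasDerivAt_sigmoid t).sub h2
  apply monotoneOn_of_deriv_nonneg (convex_Icc _ _)
  · exact fun t _ => (hder t).continuousAt.continuousWithinAt
  · exact fun t _ => ((hder t).differentiableAt).differentiableWithinAt
  · intro t ht
    rw [interior_Icc] at ht
    rw [(hder t).deriv]
    have : |t| ≤ 2 * B := abs_le.2 ⟨le_of_lt ht.1, le_of_lt ht.2⟩
    have := cB_le this
    linarith

lemma strong_convex {B : ℝ} {a b : ℝ}
    (ha : |a| ≤ 2 * B) (hb : |b| ≤ 2 * B) :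
    sigmoid b * (a - b) + (sigmoid (2*B) * (1 - sigmoid (2*B))) / 2 * (a - b) ^ 2
      ≤ Real.log (1 + Real.exp a) - Real.log (1 + Real.exp b) := by
  set c := sigmoid (2*B) * (1 - sigmoid (2*B)) with hc
  set f : ℝ → ℝ := fun t => Real.log (1 + Real.exp t) - sigmoid b * t - c / 2 * (t - b) ^ 2
    with hf
  have hder : ∀ t : ℝ, HasDerivAt f (sigmoid t - sigmoid b - c * (t - b)) t := by
    intro t
    have h1 := (hasDerivAt_softplus t).sub
      (by simpa using (hasDerivAt_id t).const_mul (sigmoid b) :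
        HasDerivAt (fun t : ℝ => sigmoid b * t) (sigmoid b) t)
    have h2 : HasDerivAt (fun t : ℝ => c / 2 * (t - b) ^ 2) (c / 2 * (2 * (t - b))) t := by
      have : HasDerivAt (fun t : ℝ => (t - b) ^ 2) (2 * (t - b) ^ 1 * 1) t :=
        ((hasDerivAt_id t).sub_const b).pow 2
      simpa using this.const_mul (c / 2)
    have := h1.sub h2
    exact this.congr_deriv (by ring)
  have hmono := sig_strong_mono B
  have habs : ∀ t : ℝ, b ≤ t → t ≤ 2 * B → 0 ≤ sigmoid t - sigmoid b - c * (t - b) := by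
    intro t h1 h2
    have hbm : b ∈ Set.Icc (-(2*B)) (2*B) := ⟨(abs_le.1 hb).1, (abs_le.1 hb).2⟩
    have htm : t ∈ Set.Icc (-(2*B)) (2*B) := ⟨by linarith [(abs_le.1 hb).1], h2⟩
    have := hmono hbm htm h1
    simp only [hc] at this ⊢
    linarith
  have habs2 : ∀ t : ℝ, -(2*B) ≤ t → t ≤ b → sigmoid t - sigmoid b - c * (t - b) ≤ 0 := by
    intro t h1 h2
    have hbm : b ∈ Set.Icc (-(2*B)) (2*B) := ⟨(abs_le.1 hb).1, (abs_le.1 hb).2⟩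
    have htm : t ∈ Set.Icc (-(2*B)) (2*B) := ⟨h1, by linarith [(abs_le.1 hb).2]⟩
    have := hmono htm hbm h2
    simp only [hc] at this ⊢
    linarith
  have key : f b ≤ f a := by
    rcases le_total b a with hba | hba
    · have : MonotoneOn f (Set.Icc b (2*B)) := by
        apply monotoneOn_of_deriv_nonneg (convex_Icc _ _)
        · exact fun t _ => (hder t).continuousAt.continuousWithinAt
        · exact fun t _ => ((hder t).differentiableAt).differentiableWithinAt
        · intro t ht
          rw [interior_Icc] at ht
          rw [(hder t).deriv]
          exact habs t (le_of_lt ht.1) (le_of_lt ht.2)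
      exact this ⟨le_refl b, (abs_le.1 hb).2⟩ ⟨hba, (abs_le.1 ha).2⟩ hba
    · have : AntitoneOn f (Set.Icc (-(2*B)) b) := by
        apply antitoneOn_of_deriv_nonpos (convex_Icc _ _)
        · exact fun t _ => (hder t).continuousAt.continuousWithinAt
        · exact fun t _ => ((hder t).differentiableAt).differentiableWithinAt
        · intro t ht
          rw [interior_Icc] at ht
          rw [(hder t).deriv]
          exact habs2 t (le_of_lt ht.1) (le_of_lt ht.2)
      exact this ⟨(abs_le.1 ha).1, hba⟩ ⟨(abs_le.1 hb).1, le_refl b⟩ hba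
  simp only [hf] at key
  nlinarith [key]

/-- Key pointwise inequality (strong convexity + AM–GM), polynomial form. -/
lemma key_ineq {B : ℝ} {a b p : ℝ} (ha : |a| ≤ 2 * B) (hb : |b| ≤ 2 * B) :
    (sigmoid (2*B) * (1 - sigmoid (2*B))) ^ 2 * (a - b) ^ 2
      ≤ 4 * (sigmoid (2*B) * (1 - sigmoid (2*B))) *
          ((Real.log (1 + Real.exp a) - p * a) - (Real.log (1 + Real.exp b) - p * b))
        + 4 * (p - sigmoid b) ^ 2 := by
  set c := sigmoid (2*B) * (1 - sigmoid (2*B)) with hc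
  have hc0 : 0 < c := by
    rw [hc]
    have := sigmoid_pos (2*B)
    have := sigmoid_lt_one (2*B)
    nlinarith
  have sc := strong_convex (B := B) ha hb
  rw [← hc] at sc
  have hsq : 0 ≤ ((p - sigmoid b) - c / 2 * (a - b)) ^ 2 := sq_nonneg _
  nlinarith [mul_le_mul_of_nonneg_left sc (le_of_lt hc0), sq_nonneg (a - b)]

/-- Symmetrization identity for a single unordered pair. -/
lemma sym_id {P1 P2 w p d0 dr : ℝ} (h1 : P1 = w * p) (h2 : P2 = w * (1 - p)) :
    P1 * (Real.log (sigmoid d0) - Real.log (sigmoid dr))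
      + P2 * (Real.log (sigmoid (-d0)) - Real.log (sigmoid (-dr)))
    = w * ((Real.log (1 + Real.exp dr) - p * dr)
        - (Real.log (1 + Real.exp d0) - p * d0)) := by
  subst h1; subst h2
  simp only [log_sigmoid, softplus_neg]
  ring

/-- Under the hypotheses of the basic inequality, if additionally L_BT(r) ≥ L_BT(r₀), then
E_{P̃}[(Δ_r − Δ_{r₀})²] ≤ 4·((ε/c_B)² + (1/(Z·c_B))·(L_BT(r) − L_BT(r₀))),
where c_B = σ(2B)(1−σ(2B)) and ε² = E_{P̃}[(σ(Δ_{r*}) − σ(Δ_{r₀}))²]. -/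
theorem stmt_16 {X Y : Type*} [Fintype X] [Fintype Y] [DecidableEq Y]
    [Nonempty X] [Nonempty Y]
    (P : X → Y → Y → ℝ) (PX : X → ℝ) (pplus pminus : X → Y → ℝ)
    (rstar : X → Y → ℝ)
    (hPX0 : ∀ x, 0 < PX x) (hPX1 : ∑ x, PX x = 1)
    (hm0 : ∀ x y, 0 < pminus x y)
    (hp1 : ∀ x, ∑ y, pplus x y = 1) (hm1 : ∀ x, ∑ y, pminus x y = 1)
    (hlink : ∀ x y, pplus x y = Real.exp (rstar x y) * pminus x y)
    (hfact : ∀ x yp ym, P x yp ym = PX x * pplus x yp * pminus x ym)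
    (hZ : 0 < Zconst P)
    (B : ℝ) (hB : 0 < B) (r r₀ : X → Y → ℝ)
    (hr : ∀ x y, |r x y| ≤ B) (hr₀ : ∀ x y, |r₀ x y| ≤ B)
    (eps : ℝ) (heps0 : 0 ≤ eps)
    (heps : eps ^ 2 = ePt P (fun x y y' =>
      (sigmoid (rstar x y - rstar x y') - sigmoid (r₀ x y - r₀ x y')) ^ 2))
    (hL : LBT P r₀ ≤ LBT P r) :
    ePt P (fun x y y' => ((r x y - r x y') - (r₀ x y - r₀ x y')) ^ 2) ≤
      4 * ((eps / (sigmoid (2 * B) * (1 - sigmoid (2 * B)))) ^ 2 +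
        (1 / (Zconst P * (sigmoid (2 * B) * (1 - sigmoid (2 * B))))) *
          (LBT P r - LBT P r₀)) := by
  have hc : 0 < sigmoid (2 * B) * (1 - sigmoid (2 * B)) := by
    have := sigmoid_pos (2*B)
    have := sigmoid_lt_one (2*B)
    nlinarith
  -- positivity of P
  have hP0 : ∀ x y y', 0 < P x y y' := by
    intro x y y'
    rw [hfact, hlink]
    exact mul_pos (mul_pos (hPX0 x) (mul_pos (Real.exp_pos _) (hm0 x y))) (hm0 x y')
  -- BT consistency: P x y y' = w * sigmoid(Δ*)
  have hPeq : ∀ x y y',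
      P x y y' = (P x y y' + P x y' y) * sigmoid (rstar x y - rstar x y') := by
    intro x y y'
    rw [hfact, hfact, hlink, hlink]
    unfold sigmoid
    rw [show -(rstar x y - rstar x y') = rstar x y' - rstar x y by ring, Real.exp_sub]
    have e1 := Real.exp_pos (rstar x y)
    have e2 := Real.exp_pos (rstar x y')
    have m1 := hm0 x y
    have m2 := hm0 x y'
    have hx := hPX0 x
    have hden : 0 < 1 + Real.exp (rstar x y') / Real.exp (rstar x y) := by positivity
    field_simp
  -- bounds on margins
  have habsr : ∀ x y y', |r x y - r x y'| ≤ 2 * B := by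
    intro x y y'
    calc |r x y - r x y'| ≤ |r x y| + |r x y'| := abs_sub _ _
      _ ≤ 2 * B := by linarith [hr x y, hr x y']
  have habsr0 : ∀ x y y', |r₀ x y - r₀ x y'| ≤ 2 * B := by
    intro x y y'
    calc |r₀ x y - r₀ x y'| ≤ |r₀ x y| + |r₀ x y'| := abs_sub _ _
      _ ≤ 2 * B := by linarith [hr₀ x y, hr₀ x y']
  -- difference of losses as a sum
  have hD : LBT P r - LBT P r₀ = ∑ x, ∑ y, ∑ y', P x y y' *
      (Real.log (sigmoid (r₀ x y - r₀ x y')) - Real.log (sigmoid (r x y - r x y'))) := by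
    simp only [LBT, mul_sub, Finset.sum_sub_distrib]
    ring
  -- symmetrization pointwise
  have hsym : ∀ x y y',
      P x y y' * (Real.log (sigmoid (r₀ x y - r₀ x y')) - Real.log (sigmoid (r x y - r x y')))
      + P x y' y * (Real.log (sigmoid (r₀ x y' - r₀ x y)) - Real.log (sigmoid (r x y' - r x y)))
      = (P x y y' + P x y' y) *
        ((Real.log (1 + Real.exp (r x y - r x y'))
            - sigmoid (rstar x y - rstar x y') * (r x y - r x y'))
          - (Real.log (1 + Real.exp (r₀ x y - r₀ x y'))
            - sigmoid (rstar x y - rstar x y') * (r₀ x y - r₀ x y'))) := by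
    intro x y y'
    have hw : P x y' y = (P x y y' + P x y' y) * (1 - sigmoid (rstar x y - rstar x y')) := by
      have h2 := hPeq x y' y
      have hneg : sigmoid (rstar x y' - rstar x y)
          = 1 - sigmoid (rstar x y - rstar x y') := by
        rw [show rstar x y' - rstar x y = -(rstar x y - rstar x y') by ring, sigmoid_neg]
      rw [hneg] at h2
      linear_combination h2
    rw [show r₀ x y' - r₀ x y = -(r₀ x y - r₀ x y') by ring,
      show r x y' - r x y = -(r x y - r x y') by ring]
    exact sym_id (hPeq x y y') hw
  -- doubled loss difference
  have h2D : (∑ x, ∑ y, ∑ y', (P x y y' + P x y' y) *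
        ((Real.log (1 + Real.exp (r x y - r x y'))
            - sigmoid (rstar x y - rstar x y') * (r x y - r x y'))
          - (Real.log (1 + Real.exp (r₀ x y - r₀ x y'))
            - sigmoid (rstar x y - rstar x y') * (r₀ x y - r₀ x y'))))
      = 2 * (LBT P r - LBT P r₀) := by
    rw [hD, two_mul]
    calc (∑ x, ∑ y, ∑ y', (P x y y' + P x y' y) *
        ((Real.log (1 + Real.exp (r x y - r x y'))
            - sigmoid (rstar x y - rstar x y') * (r x y - r x y'))
          - (Real.log (1 + Real.exp (r₀ x y - r₀ x y'))
            - sigmoid (rstar x y - rstar x y') * (r₀ x y - r₀ x y'))))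
        = ∑ x, ∑ y, ∑ y',
            (P x y y' * (Real.log (sigmoid (r₀ x y - r₀ x y'))
                - Real.log (sigmoid (r x y - r x y')))
            + P x y' y * (Real.log (sigmoid (r₀ x y' - r₀ x y))
                - Real.log (sigmoid (r x y' - r x y)))) := by
          refine Finset.sum_congr rfl fun x _ => Finset.sum_congr rfl fun y _ =>
            Finset.sum_congr rfl fun y' _ => (hsym x y y').symm
      _ = (∑ x, ∑ y, ∑ y', P x y y' * (Real.log (sigmoid (r₀ x y - r₀ x y'))
                - Real.log (sigmoid (r x y - r x y'))))
          + ∑ x, ∑ y, ∑ y', P x y' y * (Real.log (sigmoid (r₀ x y' - r₀ x y))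
                - Real.log (sigmoid (r x y' - r x y))) := by
          simp [Finset.sum_add_distrib]
      _ = (∑ x, ∑ y, ∑ y', P x y y' * (Real.log (sigmoid (r₀ x y - r₀ x y'))
                - Real.log (sigmoid (r x y - r x y'))))
          + ∑ x, ∑ y, ∑ y', P x y y' * (Real.log (sigmoid (r₀ x y - r₀ x y'))
                - Real.log (sigmoid (r x y - r x y'))) := by
          congr 1
          refine Finset.sum_congr rfl fun x _ => ?_
          exact Finset.sum_comm
  -- pointwise inequality
  have hpt : ∀ x y y',
      (if y ≠ y' then (P x y y' + P x y' y) *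
          ((r x y - r x y') - (r₀ x y - r₀ x y')) ^ 2 else 0)
      ≤ (4 / (sigmoid (2 * B) * (1 - sigmoid (2 * B)))) *
          ((P x y y' + P x y' y) *
            ((Real.log (1 + Real.exp (r x y - r x y'))
                - sigmoid (rstar x y - rstar x y') * (r x y - r x y'))
              - (Real.log (1 + Real.exp (r₀ x y - r₀ x y'))
                - sigmoid (rstar x y - rstar x y') * (r₀ x y - r₀ x y'))))
        + (4 / (sigmoid (2 * B) * (1 - sigmoid (2 * B))) ^ 2) *
          (if y ≠ y' then (P x y y' + P x y' y) *
            (sigmoid (rstar x y - rstar x y') - sigmoid (r₀ x y - r₀ x y')) ^ 2 else 0) := by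
    intro x y y'
    have hw0 : (0:ℝ) ≤ P x y y' + P x y' y :=
      le_of_lt (add_pos (hP0 x y y') (hP0 x y' y))
    by_cases h : y = y'
    · subst h
      simp only [ne_eq, not_true_eq_false, if_false, ite_false]
      have : (Real.log (1 + Real.exp (r x y - r x y))
            - sigmoid (rstar x y - rstar x y) * (r x y - r x y))
          - (Real.log (1 + Real.exp (r₀ x y - r₀ x y))
            - sigmoid (rstar x y - rstar x y) * (r₀ x y - r₀ x y)) = 0 := by
        simp
      rw [this]
      simp
    · rw [if_pos h, if_pos h]
      have hkey := key_ineq (B := B) (a := r x y - r x y') (b := r₀ x y - r₀ x y')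
        (p := sigmoid (rstar x y - rstar x y')) (habsr x y y') (habsr0 x y y')
      have hkeyw := mul_le_mul_of_nonneg_left hkey hw0
      set c := sigmoid (2*B) * (1 - sigmoid (2*B)) with hcdef
      have hc2 : (0:ℝ) < c ^ 2 := by positivity
      set w := P x y y' + P x y' y with hwdef
      set G := (Real.log (1 + Real.exp (r x y - r x y'))
                - sigmoid (rstar x y - rstar x y') * (r x y - r x y'))
              - (Real.log (1 + Real.exp (r₀ x y - r₀ x y'))
                - sigmoid (rstar x y - rstar x y') * (r₀ x y - r₀ x y')) with hGdef
      set E := (sigmoid (rstar x y - rstar x y') - sigmoid (r₀ x y - r₀ x y')) ^ 2 with hEdef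
      -- hkeyw : w * (c^2 * Δ²) ≤ w * (4*c*G + 4*E')
      calc w * ((r x y - r x y') - (r₀ x y - r₀ x y')) ^ 2
          = (w * (c ^ 2 * ((r x y - r x y') - (r₀ x y - r₀ x y')) ^ 2)) / c ^ 2 := by
            field_simp
        _ ≤ (w * (4 * c * G + 4 * E)) / c ^ 2 := (div_le_div_iff_of_pos_right hc2).mpr hkeyw
        _ = 4 / c * (w * G) + 4 / c ^ 2 * (w * E) := by
            field_simp
  -- summed inequality
  have hsum : (∑ x, ∑ y, ∑ y', if y ≠ y' then (P x y y' + P x y' y) *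
        ((r x y - r x y') - (r₀ x y - r₀ x y')) ^ 2 else 0)
      ≤ (4 / (sigmoid (2 * B) * (1 - sigmoid (2 * B)))) * (2 * (LBT P r - LBT P r₀))
        + (4 / (sigmoid (2 * B) * (1 - sigmoid (2 * B))) ^ 2) *
          (∑ x, ∑ y, ∑ y', if y ≠ y' then (P x y y' + P x y' y) *
            (sigmoid (rstar x y - rstar x y') - sigmoid (r₀ x y - r₀ x y')) ^ 2 else 0) := by
    calc (∑ x, ∑ y, ∑ y', if y ≠ y' then (P x y y' + P x y' y) *
          ((r x y - r x y') - (r₀ x y - r₀ x y')) ^ 2 else 0)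
        ≤ ∑ x, ∑ y, ∑ y',
            ((4 / (sigmoid (2 * B) * (1 - sigmoid (2 * B)))) *
              ((P x y y' + P x y' y) *
                ((Real.log (1 + Real.exp (r x y - r x y'))
                    - sigmoid (rstar x y - rstar x y') * (r x y - r x y'))
                  - (Real.log (1 + Real.exp (r₀ x y - r₀ x y'))
                    - sigmoid (rstar x y - rstar x y') * (r₀ x y - r₀ x y'))))
            + (4 / (sigmoid (2 * B) * (1 - sigmoid (2 * B))) ^ 2) *
              (if y ≠ y' then (P x y y' + P x y' y) *
                (sigmoid (rstar x y - rstar x y') - sigmoid (r₀ x y - r₀ x y')) ^ 2 else 0)) := by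
          exact Finset.sum_le_sum fun x _ => Finset.sum_le_sum fun y _ =>
            Finset.sum_le_sum fun y' _ => hpt x y y'
      _ = (4 / (sigmoid (2 * B) * (1 - sigmoid (2 * B)))) *
            (∑ x, ∑ y, ∑ y', (P x y y' + P x y' y) *
                ((Real.log (1 + Real.exp (r x y - r x y'))
                    - sigmoid (rstar x y - rstar x y') * (r x y - r x y'))
                  - (Real.log (1 + Real.exp (r₀ x y - r₀ x y'))
                    - sigmoid (rstar x y - rstar x y') * (r₀ x y - r₀ x y'))))
          + (4 / (sigmoid (2 * B) * (1 - sigmoid (2 * B))) ^ 2) *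
            (∑ x, ∑ y, ∑ y', if y ≠ y' then (P x y y' + P x y' y) *
              (sigmoid (rstar x y - rstar x y') - sigmoid (r₀ x y - r₀ x y')) ^ 2 else 0) := by
          simp only [Finset.sum_add_distrib, Finset.mul_sum]
      _ = _ := by rw [h2D]
  -- conclude
  have hcne : sigmoid (2 * B) * (1 - sigmoid (2 * B)) ≠ 0 := ne_of_gt hc
  have hZne : Zconst P ≠ 0 := ne_of_gt hZ
  simp only [ePt] at heps ⊢
  rw [div_le_iff₀ (by positivity : (0:ℝ) < 2 * Zconst P)]
  have hNE : (∑ x, ∑ y, ∑ y', if y ≠ y' then (P x y y' + P x y' y) *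
      (sigmoid (rstar x y - rstar x y') - sigmoid (r₀ x y - r₀ x y')) ^ 2 else 0)
      = eps ^ 2 * (2 * Zconst P) := by
    rw [heps]
    field_simp
  rw [hNE] at hsum
  calc (∑ x, ∑ y, ∑ y', if y ≠ y' then (P x y y' + P x y' y) *
        ((r x y - r x y') - (r₀ x y - r₀ x y')) ^ 2 else 0)
      ≤ (4 / (sigmoid (2 * B) * (1 - sigmoid (2 * B)))) * (2 * (LBT P r - LBT P r₀))
        + (4 / (sigmoid (2 * B) * (1 - sigmoid (2 * B))) ^ 2) *
          (eps ^ 2 * (2 * Zconst P)) := hsum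
    _ = 4 * ((eps / (sigmoid (2 * B) * (1 - sigmoid (2 * B)))) ^ 2 +
        1 / (Zconst P * (sigmoid (2 * B) * (1 - sigmoid (2 * B)))) *
          (LBT P r - LBT P r₀)) * (2 * Zconst P) := by
      field_simp
      ring
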